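/- Let Φ1 be a state, suppose the type 2 move T2^i is valid for Φ1 and the type 2 move T2^k is invalid for T2^i(Φ1). Then, after swapping the two moves, it is not possible that both are invalid: either T2^k is valid for Φ1, or T2^i is valid for T2^k(Φ1). -/

import Mathlib

namespace CPaper


/-- The six types of moves on states (all indices 0-based). -/
inductive Move where
  | t1 (d : ℕ)
  | t2 (i : ℕ)
  | t3 (i j : ℕ)
  | t4 (i j : ℕ)
  | t5 (i j : ℕ)
  | t6 (i j : ℕ)

/-- A state is a list of tuples of integers. -/
abbrev State := List (List ℤ)

/-- A genuine state: at least one tuple, and all tuples nonempty. -/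
def IsState (Φ : State) : Prop := Φ ≠ [] ∧ ∀ t ∈ Φ, t ≠ []

/-- The entries of a state, read in order (flattened). -/
def entries (Φ : State) : List ℤ := Φ.flatten

/-- The number of positions of a state. -/
def numPos (Φ : State) : ℕ := (entries Φ).length

/-- The value at the (0-based) position `i` of the state `Φ`. -/
def entry (Φ : State) (i : ℕ) : ℤ := (entries Φ).getD i 0

/-- The (0-based) index of the tuple containing the flat position `i`. -/
def tupleIdx : State → ℕ → ℕ
  | [], _ => 0
  | t :: ts, i => if i < t.length then 0 else tupleIdx ts (i - t.length) + 1

/-- Positions `i` and `j` lie in the same tuple of `Φ`. -/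
def SameTuple (Φ : State) (i j : ℕ) : Prop := tupleIdx Φ i = tupleIdx Φ j

/-- Position `i` is dominant in `Φ`: its value bounds the absolute value of
every entry of the tuple containing it. -/
def DominantAt (Φ : State) (i : ℕ) : Prop :=
  ∀ k, k < numPos Φ → SameTuple Φ i k → |entry Φ k| ≤ entry Φ i

/-- Apply `f` at flat position `i`, preserving the tuple structure. -/
def modifyFlat (f : ℤ → ℤ) : ℕ → State → State
  | _, [] => []
  | i, t :: ts =>
    if i < t.length then (t.take i ++ f (t.getD i 0) :: t.drop (i + 1)) :: ts
    else t :: modifyFlat f (i - t.length) ts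

/-- Concatenate the `d`-th and `(d+1)`-th tuples of `Φ` (0-based). -/
def joinAt (Φ : State) (d : ℕ) : State :=
  Φ.take d ++ (Φ.getD d [] ++ Φ.getD (d + 1) []) :: Φ.drop (d + 2)

/-- The action of a move on a state. -/
def Move.apply : Move → State → State
  | .t1 d, Φ => joinAt Φ d
  | .t2 i, Φ => modifyFlat (· + 1) i Φ
  | .t3 i j, Φ => modifyFlat (· - 1) j (modifyFlat (· + 1) i Φ)
  | .t4 i j, Φ => modifyFlat (· - 1) j (modifyFlat (· + 1) i Φ)
  | .t5 i j, Φ => modifyFlat (· + 1) j (modifyFlat (· + 1) i Φ)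
  | .t6 i j, Φ => modifyFlat (· + 1) j (modifyFlat (· + 1) i Φ)

/-- A move is admissible for `Φ` when its indices are within bounds. -/
def Move.Admissible : Move → State → Prop
  | .t1 d, Φ => d + 1 < Φ.length
  | .t2 i, Φ => i < numPos Φ
  | .t3 i j, Φ => i < numPos Φ ∧ j < numPos Φ ∧ i ≠ j
  | .t4 i j, Φ => i < numPos Φ ∧ j < numPos Φ ∧ i ≠ j
  | .t5 i j, Φ => i < numPos Φ ∧ j < numPos Φ ∧ i ≠ j
  | .t6 i j, Φ => i < numPos Φ ∧ j < numPos Φ ∧ i ≠ j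

/-- Validity of a move for a state. -/
def Move.Valid : Move → State → Prop
  | .t1 d, Φ => d + 1 < Φ.length
  | .t2 i, Φ => i < numPos Φ ∧ DominantAt Φ i
  | .t3 i j, Φ =>
      i < numPos Φ ∧ j < numPos Φ ∧ i ≠ j ∧ SameTuple Φ i j ∧ DominantAt Φ i ∧ entry Φ j ≤ 0
  | .t4 i j, Φ =>
      i < numPos Φ ∧ j < numPos Φ ∧ i ≠ j ∧ SameTuple Φ i j ∧ DominantAt Φ i ∧ 0 < entry Φ j
  | .t5 i j, Φ =>
      i < numPos Φ ∧ j < numPos Φ ∧ i ≠ j ∧ SameTuple Φ i j ∧ DominantAt Φ i ∧ entry Φ j < 0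
  | .t6 i j, Φ =>
      i < numPos Φ ∧ j < numPos Φ ∧ i ≠ j ∧ SameTuple Φ i j ∧ DominantAt Φ i ∧ 0 ≤ entry Φ j

def Move.isType1 : Move → Prop
  | .t1 _ => True
  | _ => False

def Move.isType2 : Move → Prop
  | .t2 _ => True
  | _ => False

def Move.isType3 : Move → Prop
  | .t3 _ _ => True
  | _ => False

/-- The move is of one of the types 1, 2 or 3. -/
def Move.isType123 : Move → Prop
  | .t1 _ => True
  | .t2 _ => True
  | .t3 _ _ => True
  | _ => False

/-- `ValidSeq ms Φ Ψ`: the list of moves `ms`, applied in order starting from `Φ`,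
consists of valid moves and ends at `Ψ`. -/
def ValidSeq : List Move → State → State → Prop
  | [], Φ, Ψ => Φ = Ψ
  | m :: ms, Φ, Ψ => m.Valid Φ ∧ ValidSeq ms (m.apply Φ) Ψ

/-- A tuple of integers is C*_{Z,6}-realizable: the one-tuple state `[l]` is reachable
from `((0),...,(0))` by a finite sequence of valid moves of types 1–6. -/
def CStarZ6 (l : List ℤ) : Prop :=
  ∃ ms : List Move, ValidSeq ms (List.replicate l.length ([0] : List ℤ)) [l]

/-- A tuple of integers is C*_{Z,3}-realizable: the one-tuple state `[l]` is reachable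
from `((0),...,(0))` by a finite sequence of valid moves of types 1, 2 and 3. -/
def CStarZ3 (l : List ℤ) : Prop :=
  ∃ ms : List Move, (∀ m ∈ ms, m.isType123) ∧
    ValidSeq ms (List.replicate l.length ([0] : List ℤ)) [l]



/-! ### Auxiliary lemmas -/

lemma modify_append_left {α : Type*} (f : α → α) (i : ℕ) (l1 l2 : List α)
    (h : i < l1.length) :
    List.modify (l1 ++ l2) i f = List.modify l1 i f ++ l2 := by
  rw [List.modify_eq_take_cons_drop (by simp; omega),
      List.modify_eq_take_cons_drop h,
      List.take_append_of_le_length (by omega),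
      List.getElem_append_left h,
      List.drop_append_of_le_length (by omega)]
  simp

lemma modify_append_right {α : Type*} (f : α → α) (i : ℕ) (l1 l2 : List α)
    (h : l1.length ≤ i) :
    List.modify (l1 ++ l2) i f = l1 ++ List.modify l2 (i - l1.length) f := by
  apply List.ext_getElem?
  intro m
  simp only [List.getElem?_modify, List.getElem?_append]
  by_cases hm : m < l1.length
  · simp only [if_pos hm]
    have hne : i ≠ m := by omega
    cases l1[m]? <;> simp [hne]
  · have hm' : l1.length ≤ m := Nat.le_of_not_lt hm
    simp only [if_neg hm]
    by_cases hi2 : i = m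
    · have : i - l1.length = m - l1.length := by omega
      simp [hi2, this]
    · have : i - l1.length ≠ m - l1.length := by omega
      cases l2[m - l1.length]? <;> simp [hi2, this]

lemma entries_modifyFlat (f : ℤ → ℤ) (i : ℕ) (Φ : State) :
    entries (modifyFlat f i Φ) = (entries Φ).modify i f := by
  induction Φ generalizing i with
  | nil => simp [entries, modifyFlat]
  | cons t ts ih =>
    by_cases h : i < t.length
    · have hget : t.getD i 0 = t[i] := List.getD_eq_getElem t 0 h
      simp only [modifyFlat, if_pos h, entries, List.flatten_cons, hget]
      rw [← List.modify_eq_take_cons_drop h, modify_append_left f i t _ h]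
    · have h' : t.length ≤ i := Nat.le_of_not_lt h
      simp only [modifyFlat, if_neg h, entries, List.flatten_cons]
      rw [modify_append_right f i t _ h']
      have := ih (i - t.length)
      simp only [entries] at this
      rw [this]

lemma numPos_modifyFlat (f : ℤ → ℤ) (i : ℕ) (Φ : State) :
    numPos (modifyFlat f i Φ) = numPos Φ := by
  simp [numPos, entries_modifyFlat, List.length_modify]

lemma entry_modifyFlat_self (f : ℤ → ℤ) (i : ℕ) (Φ : State) (h : i < numPos Φ) :
    entry (modifyFlat f i Φ) i = f (entry Φ i) := by
  simp only [entry, entries_modifyFlat]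
  rw [List.getD_eq_getElem?_getD, List.getElem?_modify,
      List.getElem?_eq_getElem h, List.getD_eq_getElem (entries Φ) 0 h]
  simp

lemma entry_modifyFlat_ne (f : ℤ → ℤ) (i j : ℕ) (Φ : State) (h : j ≠ i) :
    entry (modifyFlat f i Φ) j = entry Φ j := by
  simp only [entry, entries_modifyFlat]
  rw [List.getD_eq_getElem?_getD, List.getElem?_modify, List.getD_eq_getElem?_getD]
  have hne : i ≠ j := fun hh => h hh.symm
  cases hl : (entries Φ)[j]? <;> simp [hne]

lemma tupleIdx_modifyFlat (f : ℤ → ℤ) (i : ℕ) (Φ : State) (j : ℕ) :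
    tupleIdx (modifyFlat f i Φ) j = tupleIdx Φ j := by
  induction Φ generalizing i j with
  | nil => simp [modifyFlat]
  | cons t ts ih =>
    by_cases h : i < t.length
    · have hlen : (t.take i ++ f (t.getD i 0) :: t.drop (i + 1)).length = t.length := by
        simp; omega
      simp only [modifyFlat, if_pos h, tupleIdx, hlen]
    · simp only [modifyFlat, if_neg h, tupleIdx]
      by_cases hj : j < t.length
      · simp [hj]
      · simp [hj, ih]

lemma sameTuple_modifyFlat (f : ℤ → ℤ) (i : ℕ) (Φ : State) (j k : ℕ) :
    SameTuple (modifyFlat f i Φ) j k ↔ SameTuple Φ j k := by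
  simp [SameTuple, tupleIdx_modifyFlat]

/-- If a valid type 2 move is followed by an invalid (admissible but not valid)
type 2 move, then after the swap it is not possible that both moves are invalid. -/
theorem T2_valid_T2_invalid_swap (Φ : State) (hΦ : IsState Φ) (i k : ℕ)
    (hval : (Move.t2 i).Valid Φ)
    (hadm : (Move.t2 k).Admissible ((Move.t2 i).apply Φ))
    (hinv : ¬ (Move.t2 k).Valid ((Move.t2 i).apply Φ)) :
    (Move.t2 k).Valid Φ ∨ (Move.t2 i).Valid ((Move.t2 k).apply Φ) := by
  rcases hval with ⟨hi, hdomi⟩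
  by_cases hik : i = k
  · exact Or.inl ⟨hik ▸ hi, hik ▸ hdomi⟩
  have hk : k < numPos Φ := by
    have := hadm
    simp only [Move.Admissible, Move.apply, numPos_modifyFlat] at this
    exact this
  by_cases hst : SameTuple Φ i k
  · -- same tuple, i ≠ k
    set a := entry Φ i with ha
    set b := entry Φ k with hb
    have hba : |b| ≤ a := hdomi k hk hst
    by_cases hlt : b < a
    · -- right disjunct: i dominant in T2^k Φ
      right
      refine ⟨by simpa [Move.apply, numPos_modifyFlat] using hi, ?_⟩
      intro j hj hstj
      simp only [Move.apply] at hj hstj ⊢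
      rw [numPos_modifyFlat] at hj
      rw [sameTuple_modifyFlat] at hstj
      rw [entry_modifyFlat_ne _ k i Φ hik]
      by_cases hjk : j = k
      · subst hjk
        rw [entry_modifyFlat_self _ _ _ hk]
        have h1 := abs_le.mp hba
        rw [abs_le]
        constructor <;> omega
      · rw [entry_modifyFlat_ne _ k j Φ hjk]
        exact hdomi j hj hstj
    · -- b ≥ a, so a = b and k dominant in Φ
      push_neg at hlt
      have hab : a = b := le_antisymm hlt ((le_abs_self b).trans hba)
      left
      refine ⟨hk, ?_⟩
      intro j hj hstj
      have hstij : SameTuple Φ i j := hst.trans hstj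
      calc |entry Φ j| ≤ a := hdomi j hj hstij
        _ = b := hab
  · -- different tuples: right disjunct
    right
    refine ⟨by simpa [Move.apply, numPos_modifyFlat] using hi, ?_⟩
    intro j hj hstj
    simp only [Move.apply] at hj hstj ⊢
    rw [numPos_modifyFlat] at hj
    rw [sameTuple_modifyFlat] at hstj
    rw [entry_modifyFlat_ne _ k i Φ hik]
    have hjk : j ≠ k := fun h => hst (h ▸ hstj)
    rw [entry_modifyFlat_ne _ k j Φ hjk]
    exact hdomi j hj hstj


end CPaper
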